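/- For every natural number i, the set of scalars c ∈ K such that the scalar matrix c·Id lies in ω^i is exactly the R-submodule of K spanned by t^{−⌊i(e−1)/e⌋} (floor of the rational number i(e−1)/e); that is, the centralizer Z(ω^i) of the i-th power of the dualizing bimodule of the block hereditary order Δ equals the fractional ideal (t^{−⌊i(e−1)/e⌋}). -/

import Mathlib

/-- The block hereditary order of ramification index `e` over a DVR `R` with
uniformizer `t`, with block assignment `β : Fin s → Fin e`: matrices whose
`(i,j)` entry lies in `t·R` when `β j < β i` and in (the image of) `R`
otherwise. -/
def blockHereditaryOrder (R K : Type*) [CommRing R] [Field K] [Algebra R K]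
    (t : R) (s e : ℕ) (β : Fin s → Fin e) : Set (Matrix (Fin s) (Fin s) K) :=
  {M | ∀ i j : Fin s,
    if β j < β i then ∃ r : R, algebraMap R K (t * r) = M i j
    else ∃ r : R, algebraMap R K r = M i j}

/-- The trace dual `ω` of the block hereditary order `Δ`, as an `R`-submodule of
the matrix algebra: matrices `M` with `trace (M * N)` in the image of `R` in `K`
for all `N ∈ Δ`. -/
def blockTraceDual (R K : Type*) [CommRing R] [Field K] [Algebra R K]
    (t : R) (s e : ℕ) (β : Fin s → Fin e) : Submodule R (Matrix (Fin s) (Fin s) K) where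
  carrier := {M | ∀ N ∈ blockHereditaryOrder R K t s e β,
    Matrix.trace (M * N) ∈ (1 : Submodule R K)}
  add_mem' := by
    intro a b ha hb N hN
    rw [Matrix.add_mul, Matrix.trace_add]
    exact add_mem (ha N hN) (hb N hN)
  zero_mem' := by intro N hN; simp
  smul_mem' := by
    intro r M hM N hN
    rw [Matrix.smul_mul, Matrix.trace_smul]
    exact Submodule.smul_mem _ _ (hM N hN)

/-! Auxiliary material -/

/-- ceiling of `n / e` for `e > 0`. -/
def zce (e n : ℤ) : ℤ := -((-n) / e)

lemma zce_superadd {e : ℤ} (he : 0 < e) (x y : ℤ) :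
    zce e (x + y) ≤ zce e x + zce e y := by
  unfold zce
  have h1 : (-x)/e*e ≤ -x := Int.ediv_mul_le _ he.ne'
  have h2 : (-y)/e*e ≤ -y := Int.ediv_mul_le _ he.ne'
  have h3 : (-x)/e + (-y)/e ≤ (-(x+y))/e := by
    rw [Int.le_ediv_iff_mul_le he, add_mul]
    omega
  omega

lemma zce_shift {e : ℤ} (he : e ≠ 0) (x k : ℤ) : zce e (x + k * e) = zce e x + k := by
  unfold zce
  have h : -(x + k*e) = -x + (-k)*e := by ring
  rw [h, Int.add_mul_ediv_right _ _ he]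
  ring

lemma zce_eq_zero {e x : ℤ} (h0 : -e < x) (h1 : x ≤ 0) : zce e x = 0 := by
  unfold zce
  rw [Int.ediv_eq_zero_of_lt (by omega) (by omega)]
  ring

lemma zce_eq_one {e x : ℤ} (he : 0 < e) (h0 : 0 < x) (h1 : x ≤ e) : zce e x = 1 := by
  have h := zce_shift he.ne' (x - e) 1
  have hz : zce e (x - e) = 0 := zce_eq_zero (by omega) (by omega)
  have hx : x - e + 1 * e = x := by ring
  rw [hx, hz] at h
  omega

/-- exponent of the `(u,v)` entry bound of `ω^i`, with `a = β u`, `b = β v`. -/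
def expnt (e i a b : ℕ) : ℤ := zce (e : ℤ) ((i : ℤ) - ((b : ℤ) - (a : ℤ))) - (i : ℤ)

lemma expnt_one {e : ℕ} (he : 1 ≤ e) {a b : ℕ} (hae : a < e) (_hbe : b < e) :
    expnt e 1 a b = if a < b then -1 else 0 := by
  unfold expnt
  split
  · rw [zce_eq_zero (by push_cast; omega) (by push_cast; omega)]
    norm_num
  · rw [zce_eq_one (by exact_mod_cast he) (by push_cast; omega) (by push_cast; omega)]
    norm_num

lemma expnt_superadd {e : ℕ} (he : 1 ≤ e) (i a w b : ℕ) :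
    expnt e (i+1) a b ≤ expnt e i a w + expnt e 1 w b := by
  have h := zce_superadd (by exact_mod_cast he : (0:ℤ) < (e:ℤ))
      ((i:ℤ) - ((w:ℤ) - a)) ((1:ℤ) - ((b:ℤ) - w))
  have harg : ((i:ℤ) - ((w:ℤ) - a)) + ((1:ℤ) - ((b:ℤ) - w)) = ((i:ℤ)+1) - ((b:ℤ) - a) := by ring
  rw [harg] at h
  unfold expnt
  push_cast
  omega

lemma expnt_tight {e : ℕ} (he : 1 ≤ e) (i : ℕ) (a b : ℕ) :
    expnt e (i+1) a b = expnt e i a ((a + i) % e) + expnt e 1 ((a + i) % e) b := by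
  set w : ℕ := (a + i) % e with hw
  have hq := Nat.div_add_mod (a + i) e
  set q : ℕ := (a + i) / e with hqdef
  have he0 : (e:ℤ) ≠ 0 := Int.natCast_ne_zero.mpr (by omega)
  have hq' : (e:ℤ)*(q:ℤ) + (w:ℤ) = (a:ℤ) + (i:ℤ) := by exact_mod_cast hq
  have hcm : (e:ℤ)*(q:ℤ) = (q:ℤ)*(e:ℤ) := mul_comm _ _
  have h1 : (i:ℤ) - ((w:ℤ) - a) = 0 + (q:ℤ) * e := by linarith
  have hz0 : zce (e:ℤ) 0 = 0 := zce_eq_zero (by omega) le_rfl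
  have hz1 : zce (e:ℤ) ((i:ℤ) - ((w:ℤ) - a)) = q := by
    rw [h1, zce_shift he0, hz0]
    ring
  have h2 : ((i:ℤ)+1) - ((b:ℤ) - a) = ((1:ℤ) - ((b:ℤ) - w)) + (q:ℤ) * e := by linarith
  have hz2 : zce (e:ℤ) (((i:ℤ)+1) - ((b:ℤ) - a))
      = zce (e:ℤ) ((1:ℤ) - ((b:ℤ) - w)) + q := by rw [h2, zce_shift he0]
  unfold expnt
  push_cast
  push_cast at hz1 hz2
  omega

lemma expnt_diag {e : ℕ} (he : 1 ≤ e) (i a : ℕ) :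
    expnt e i a a = -(Int.fdiv ((i : ℤ) * ((e : ℤ) - 1)) (e : ℤ)) := by
  have h0 : (0:ℤ) ≤ (e:ℤ) := by positivity
  have he0 : (e:ℤ) ≠ 0 := Int.natCast_ne_zero.mpr (by omega)
  rw [Int.fdiv_eq_ediv_of_nonneg _ h0]
  unfold expnt zce
  have h1 : (i:ℤ) * ((e:ℤ) - 1) = -(i:ℤ) + (i:ℤ)*(e:ℤ) := by ring
  rw [h1, Int.add_mul_ediv_right _ _ he0]
  have h2 : (i:ℤ) - ((a:ℤ) - a) = (i:ℤ) := by ring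
  rw [h2]
  ring

section ModPart

variable {R K : Type*} [CommRing R] [Field K] [Algebra R K]

lemma tpow_mem_span {t : R} (hπ : algebraMap R K t ≠ 0) {a b : ℤ} (h : b ≤ a) :
    (algebraMap R K t) ^ a ∈ Submodule.span R {(algebraMap R K t) ^ b} := by
  refine Submodule.mem_span_singleton.2 ⟨t ^ (a - b).toNat, ?_⟩
  have h1 : (algebraMap R K) (t ^ (a-b).toNat) = (algebraMap R K t) ^ (((a-b).toNat : ℕ) : ℤ) := by
    rw [map_pow]; exact (zpow_natCast _ _).symm
  rw [Algebra.smul_def, h1, Int.toNat_of_nonneg (by omega), ← zpow_add₀ hπ]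
  congr 1
  omega

lemma span_tpow_mono {t : R} (hπ : algebraMap R K t ≠ 0) {a b : ℤ} (h : b ≤ a) :
    (Submodule.span R {(algebraMap R K t) ^ a} : Submodule R K)
      ≤ Submodule.span R {(algebraMap R K t) ^ b} := by
  rw [Submodule.span_le, Set.singleton_subset_iff]
  exact tpow_mem_span hπ h

lemma span_single_mul {p q x y : K} (hx : x ∈ Submodule.span R {p})
    (hy : y ∈ Submodule.span R {q}) : x * y ∈ Submodule.span R {p * q} := by
  obtain ⟨a, ha⟩ := Submodule.mem_span_singleton.1 hx
  obtain ⟨b, hb⟩ := Submodule.mem_span_singleton.1 hy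
  exact Submodule.mem_span_singleton.2 ⟨a * b, by rw [← ha, ← hb, smul_mul_smul_comm]⟩

/-- entrywise explicit module equal to `ω ^ i` for `i ≥ 1`. -/
def entryMods (R K : Type*) [CommRing R] [Field K] [Algebra R K] (t : R) (s e : ℕ)
    (β : Fin s → Fin e) (i : ℕ) : Submodule R (Matrix (Fin s) (Fin s) K) where
  carrier := {M | ∀ u v, M u v ∈
    Submodule.span R {(algebraMap R K t) ^ expnt e i (β u) (β v)}}
  add_mem' := by
    intro a b ha hb u v
    exact add_mem (ha u v) (hb u v)
  zero_mem' := by intro u v; exact Submodule.zero_mem _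
  smul_mem' := by
    intro r M hM u v
    exact Submodule.smul_mem _ _ (hM u v)

variable {t : R} {s e : ℕ} {β : Fin s → Fin e}

lemma std_mem_entryMods (hπ : algebraMap R K t ≠ 0) (i : ℕ) (u v : Fin s) {z : ℤ}
    (hz : expnt e i (β u) (β v) ≤ z) :
    Matrix.single u v ((algebraMap R K t) ^ z) ∈ entryMods R K t s e β i := by
  intro p q
  by_cases hpq : u = p ∧ v = q
  · obtain ⟨rfl, rfl⟩ := hpq
    rw [Matrix.single_apply_same]
    exact tpow_mem_span hπ hz
  · rw [Matrix.single]
    simp only [Matrix.of_apply, if_neg hpq]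
    exact Submodule.zero_mem _

lemma trace_mul_std (M : Matrix (Fin s) (Fin s) K) (v u : Fin s) (c : K) :
    Matrix.trace (M * Matrix.single v u c) = M u v * c := by
  simp [Matrix.trace, Matrix.mul_apply, Matrix.single, Matrix.diag, mul_ite,
    ite_and, Finset.sum_ite_eq, Finset.sum_ite_eq']

lemma tstd_mem_order (v u : Fin s) (c : R) :
    Matrix.single v u (algebraMap R K (t * c)) ∈ blockHereditaryOrder R K t s e β := by
  intro i j
  by_cases hij : v = i ∧ u = j
  · obtain ⟨rfl, rfl⟩ := hij
    rw [Matrix.single_apply_same]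
    split
    · exact ⟨c, rfl⟩
    · exact ⟨t * c, rfl⟩
  · rw [Matrix.single]
    simp only [Matrix.of_apply, if_neg hij]
    split
    · exact ⟨0, by simp⟩
    · exact ⟨0, by simp⟩

lemma std_mem_order (v u : Fin s) (c : R) (h : ¬ β u < β v) :
    Matrix.single v u (algebraMap R K c) ∈ blockHereditaryOrder R K t s e β := by
  intro i j
  by_cases hij : v = i ∧ u = j
  · obtain ⟨rfl, rfl⟩ := hij
    rw [Matrix.single_apply_same]
    rw [if_neg h]
    exact ⟨c, rfl⟩
  · rw [Matrix.single]
    simp only [Matrix.of_apply, if_neg hij]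
    split
    · exact ⟨0, by simp⟩
    · exact ⟨0, by simp⟩

lemma dual_eq (he : 1 ≤ e) (hπ : algebraMap R K t ≠ 0) :
    blockTraceDual R K t s e β = entryMods R K t s e β 1 := by
  ext M
  constructor
  · intro hM u v
    rw [expnt_one he (β u).2 (β v).2]
    by_cases hlt : (β u : ℕ) < (β v : ℕ)
    · rw [if_pos hlt]
      have h1 := hM _ (tstd_mem_order (β := β) v u 1)
      rw [trace_mul_std] at h1
      obtain ⟨r, hr⟩ := Submodule.mem_one.1 h1
      refine Submodule.mem_span_singleton.2 ⟨r, ?_⟩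
      rw [Algebra.smul_def, zpow_neg_one]
      rw [mul_one] at hr
      rw [mul_inv_eq_iff_eq_mul₀ hπ]
      linear_combination hr
    · rw [if_neg hlt]
      have h1 := hM _ (std_mem_order (β := β) v u 1 (by
        intro hc; exact hlt (by exact_mod_cast hc)))
      rw [trace_mul_std, map_one, mul_one] at h1
      obtain ⟨r, hr⟩ := Submodule.mem_one.1 h1
      refine Submodule.mem_span_singleton.2 ⟨r, ?_⟩
      rw [zpow_zero, Algebra.smul_def, mul_one, hr]
  · intro hM N hN
    have htr : Matrix.trace (M * N) = ∑ u, ∑ v, M u v * N v u := by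
      simp [Matrix.trace, Matrix.mul_apply, Matrix.diag]
    rw [htr]
    refine Submodule.sum_mem _ fun u _ => Submodule.sum_mem _ fun v _ => ?_
    have hMuv := hM u v
    rw [expnt_one he (β u).2 (β v).2] at hMuv
    obtain ⟨r, hr⟩ := Submodule.mem_span_singleton.1 hMuv
    have hNvu := hN v u
    by_cases hlt : β u < β v
    · rw [if_pos hlt] at hNvu
      obtain ⟨r', hr'⟩ := hNvu
      rw [if_pos (by exact_mod_cast hlt)] at hr
      refine Submodule.mem_one.2 ⟨r * r', ?_⟩
      rw [← hr, ← hr', Algebra.smul_def, zpow_neg_one, map_mul, map_mul]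
      field_simp
    · rw [if_neg hlt] at hNvu
      obtain ⟨r', hr'⟩ := hNvu
      rw [if_neg (by intro hc; exact hlt (by exact_mod_cast hc))] at hr
      refine Submodule.mem_one.2 ⟨r * r', ?_⟩
      rw [← hr, ← hr', Algebra.smul_def, zpow_zero, map_mul, mul_one]

lemma entry_mul (he : 1 ≤ e) (hπ : algebraMap R K t ≠ 0)
    (hsurj : Function.Surjective β) (i : ℕ) :
    entryMods R K t s e β i * entryMods R K t s e β 1 = entryMods R K t s e β (i+1) := by
  apply le_antisymm
  · rw [Submodule.mul_le]
    intro m hm n hn u v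
    rw [Matrix.mul_apply]
    refine Submodule.sum_mem _ fun w _ => ?_
    have h1 := span_single_mul (hm u w) (hn w v)
    rw [← zpow_add₀ hπ] at h1
    exact span_tpow_mono hπ (expnt_superadd he i (β u) (β w) (β v)) h1
  · intro M hM
    rw [Matrix.matrix_eq_sum_single M]
    refine Submodule.sum_mem _ fun u _ => Submodule.sum_mem _ fun v _ => ?_
    obtain ⟨r, hr⟩ := Submodule.mem_span_singleton.1 (hM u v)
    rw [← hr, ← Matrix.smul_single]
    refine Submodule.smul_mem _ _ ?_
    obtain ⟨w, hw⟩ := hsurj ⟨(((β u : ℕ) + i) % e : ℕ), Nat.mod_lt _ (by omega)⟩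
    have hwv : (β w : ℕ) = ((β u : ℕ) + i) % e := by rw [hw]
    have key : expnt e (i+1) (β u) (β v) = expnt e i (β u) (β w) + expnt e 1 (β w) (β v) := by
      rw [hwv]; exact expnt_tight he i (β u) (β v)
    rw [key, zpow_add₀ hπ, ← Matrix.single_mul_single_same _ u w v]
    exact Submodule.mul_mem_mul (std_mem_entryMods hπ i u w le_rfl)
      (std_mem_entryMods hπ 1 w v le_rfl)

lemma pow_dual_eq (he : 1 ≤ e) (hπ : algebraMap R K t ≠ 0)
    (hsurj : Function.Surjective β) : ∀ j : ℕ,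
    blockTraceDual R K t s e β ^ (j+1) = entryMods R K t s e β (j+1)
  | 0 => by rw [pow_one, dual_eq he hπ]
  | (j+1) => by
      rw [pow_succ, pow_dual_eq he hπ hsurj j, dual_eq he hπ, entry_mul he hπ hsurj]

lemma mem_entryMods_iff {i : ℕ} {M : Matrix (Fin s) (Fin s) K} :
    M ∈ entryMods R K t s e β i ↔ ∀ u v, M u v ∈
      Submodule.span R {(algebraMap R K t) ^ expnt e i (β u) (β v)} := Iff.rfl

end ModPart


/-- For every natural number `i`, the centralizer of `ω^i`, i.e. the set of
scalars `c ∈ K` whose scalar matrix `c · Id` lies in the `i`-th power of the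
trace dual of the block hereditary order, is the fractional ideal
`(t ^ (-⌊i(e-1)/e⌋))`. -/
theorem centralizer_traceDual_pow (R K : Type*) [CommRing R] [IsDomain R]
    [IsDiscreteValuationRing R] [Field K] [Algebra R K] [IsFractionRing R K]
    (t : R) (ht : Ideal.span {t} = IsLocalRing.maximalIdeal R)
    (s e : ℕ) (hs : 1 ≤ s) (he : 1 ≤ e)
    (β : Fin s → Fin e) (hmono : Monotone β) (hsurj : Function.Surjective β) :
    ∀ i : ℕ,
      {c : K | Matrix.scalar (Fin s) c ∈
          (blockTraceDual R K t s e β ^ i : Submodule R (Matrix (Fin s) (Fin s) K))}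
        = (Submodule.span R
            {(algebraMap R K t) ^ (-(Int.fdiv ((i : ℤ) * ((e : ℤ) - 1)) (e : ℤ)))} :
            Submodule R K) := by
  have ht0 : t ≠ 0 := by
    intro h
    exact IsDiscreteValuationRing.not_a_field R
      (by rw [← ht, h]; exact Ideal.span_singleton_eq_bot.mpr rfl)
  have hπ : algebraMap R K t ≠ 0 := fun h0 =>
    ht0 (IsFractionRing.injective R K (by rw [h0, map_zero]))
  intro i
  cases i with
  | zero =>
    have hz : ((algebraMap R K t) ^ (-(Int.fdiv (((0:ℕ):ℤ) * ((e:ℤ) - 1)) (e:ℤ)))) = 1 := by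
      norm_num [Int.zero_fdiv]
    rw [pow_zero, hz]
    ext c
    simp only [Set.mem_setOf_eq, SetLike.mem_coe]
    constructor
    · intro h
      obtain ⟨y, hy⟩ := Submodule.mem_one.1 h
      have hcy : algebraMap R K y = c := by
        have h2 := congrFun (congrFun hy ⟨0, hs⟩) ⟨0, hs⟩
        simpa [Matrix.algebraMap_eq_diagonal, Matrix.scalar_apply] using h2
      exact Submodule.mem_span_singleton.2 ⟨y, by rw [Algebra.smul_def, mul_one, hcy]⟩
    · intro h
      obtain ⟨y, hy⟩ := Submodule.mem_span_singleton.1 h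
      refine Submodule.mem_one.2 ⟨y, ?_⟩
      have hcy : c = algebraMap R K y := by rw [← hy, Algebra.smul_def, mul_one]
      rw [hcy]
      ext u v
      by_cases huv : u = v
      · subst huv
        simp [Matrix.algebraMap_eq_diagonal, Matrix.scalar_apply]
      · simp [Matrix.algebraMap_eq_diagonal, Matrix.scalar_apply,
          Matrix.diagonal_apply_ne _ huv]
  | succ j =>
    rw [pow_dual_eq he hπ hsurj j]
    ext c
    simp only [Set.mem_setOf_eq, SetLike.mem_coe]
    rw [mem_entryMods_iff]
    constructor
    · intro h
      have hd := h ⟨0, hs⟩ ⟨0, hs⟩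
      rw [expnt_diag he (j+1) (β ⟨0, hs⟩)] at hd
      have hc : (Matrix.scalar (Fin s) c) ⟨0, hs⟩ ⟨0, hs⟩ = c := by
        simp [Matrix.scalar_apply]
      rw [hc] at hd
      exact_mod_cast hd
    · intro h u v
      by_cases huv : u = v
      · subst huv
        rw [expnt_diag he (j+1) (β u)]
        have hc : (Matrix.scalar (Fin s) c) u u = c := by simp [Matrix.scalar_apply]
        rw [hc]
        exact_mod_cast h
      · have hc : (Matrix.scalar (Fin s) c) u v = 0 := by
          simp [Matrix.scalar_apply, Matrix.diagonal_apply_ne _ huv]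
        rw [hc]
        exact Submodule.zero_mem _
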